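/- arXiv:2506.15336 — 4 statements merged into one kernel-verified Lean document; each statement's English description precedes it below -/
import Mathlib

section
/- Define the n×n matrix B with entries b_{1,1} = b, b_{1,j} = 0 for j ≥ 2, b_{i,j} = 0 for j < i, and b_{i,j} = (-1)^{j+1} * binom(j-2, i-2) * b / λ^{i+j-2} for 2 ≤ i ≤ j, where |b| = 1 and |λ| = 1. Then B * conj(B) = I. -/
open Matrix
open Finset

lemma alt_sum (N : ℕ) :
    ∑ m ∈ Finset.range (N+1), ((-1:ℂ))^m * (N.choose m) = if N = 0 then 1 else 0 := by
  cases N with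
  | zero => simp
  | succ n =>
    have h := add_pow (-1 : ℂ) 1 n.succ
    simp only [one_pow, mul_one, neg_add_cancel] at h
    rw [← h, zero_pow n.succ_ne_zero, if_neg n.succ_ne_zero]

lemma key_sum (i k : ℕ) :
    ∑ j ∈ Finset.Icc i k, ((-1:ℂ))^(j+k) * (j.choose i) * (k.choose j)
      = if i = k then 1 else 0 := by
  rcases le_or_gt i k with h | h
  · have hmap : Finset.Icc i k = (Finset.Icc 0 (k - i)).map (addRightEmbedding i) := by
      rw [Finset.map_add_right_Icc, zero_add, Nat.sub_add_cancel h]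
    rw [hmap, Finset.sum_map]
    simp only [addRightEmbedding_apply]
    have hterm : ∀ m ∈ Finset.Icc 0 (k - i),
        ((-1:ℂ))^(m+i+k) * ((m+i).choose i) * (k.choose (m+i))
          = ((-1:ℂ))^(i+k) * (k.choose i) * ((-1)^m * ((k-i).choose m)) := by
      intro m hm
      simp only [Finset.mem_Icc] at hm
      have hmk : m + i ≤ k := by omega
      have hc : k.choose (m+i) * (m+i).choose i = k.choose i * (k-i).choose m := by
        have := Nat.choose_mul (n := k) (k := m+i) (s := i) (by omega)
        simpa [Nat.add_sub_cancel] using this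
      have hc' : ((k.choose (m+i) : ℂ)) * ((m+i).choose i) = (k.choose i) * ((k-i).choose m) := by
        exact_mod_cast congrArg (Nat.cast (R := ℂ)) hc
      rw [pow_add]
      ring_nf
      ring_nf at hc'
      rw [mul_comm (((m+i).choose i : ℂ)) ((k.choose (m+i) : ℂ)), hc']
    rw [Finset.sum_congr rfl hterm, ← Finset.mul_sum]
    have : Finset.Icc 0 (k - i) = Finset.range (k - i + 1) := by
      ext x; simp
    rw [this, alt_sum]
    rcases eq_or_lt_of_le h with rfl | hlt
    · simp [← two_mul, pow_mul]
    · rw [if_neg (by omega), if_neg (by omega), mul_zero]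
  · rw [Finset.Icc_eq_empty (by omega), if_neg (by omega), Finset.sum_empty]


/-- The matrix `B` from the paper, in 1-based coordinates: `b₁₁ = b`,
`b₁ⱼ = 0` for `j ≥ 2`, `bᵢⱼ = 0` for `j < i` and
`bᵢⱼ = (-1)^(j+1) C(j-2, i-2) b / λ^(i+j-2)` for `2 ≤ i ≤ j`.
Here `i, j : Fin n` correspond to the 1-based indices `i+1, j+1`. -/
noncomputable def Bmat (b lam : ℂ) (n : ℕ) : Matrix (Fin n) (Fin n) ℂ :=
  Matrix.of fun i j =>
    if (i : ℕ) = 0 then (if (j : ℕ) = 0 then b else 0)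
    else if (j : ℕ) < (i : ℕ) then 0
    else (-1) ^ ((j : ℕ) + 2) * (((j : ℕ) - 1).choose ((i : ℕ) - 1) : ℂ) * b
      / lam ^ ((i : ℕ) + (j : ℕ))

/-- If `|b| = 1` and `|λ| = 1` then `B * conj B = I`. -/
theorem Bmat_mul_conj_eq_one (n : ℕ) (b lam : ℂ)
    (hb : ‖b‖ = 1) (hlam : ‖lam‖ = 1) :
    Bmat b lam n * (Bmat b lam n).map (starRingEnd ℂ) = 1 := by
  have hlam0 : lam ≠ 0 := by intro h; simp [h] at hlam
  have hb0 : b ≠ 0 := by intro h; simp [h] at hb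
  have hcb : (starRingEnd ℂ) b = b⁻¹ := (Complex.inv_eq_conj hb).symm
  have hconj : (starRingEnd ℂ) lam = lam⁻¹ := (Complex.inv_eq_conj hlam).symm
  have hbb : b * (starRingEnd ℂ) b = 1 := by
    rw [hcb, mul_inv_cancel₀ hb0]
  ext i k
  rw [Matrix.mul_apply, Matrix.one_apply]
  by_cases hi : (i : ℕ) = 0
  · rw [Finset.sum_eq_single i]
    · simp only [Bmat, Matrix.map_apply, Matrix.of_apply, hi, if_pos rfl]
      by_cases hk : (k : ℕ) = 0
      · have : i = k := Fin.ext (by omega)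
        simp [this, hk, hbb]
      · have : i ≠ k := fun h => hk (h ▸ hi)
        simp [hk, this]
    · intro j _ hj
      have hj0 : (j : ℕ) ≠ 0 := fun h => hj (Fin.ext (by omega))
      simp only [Bmat, Matrix.of_apply, if_pos hi, if_neg hj0, zero_mul]
    · intro h; exact absurd (Finset.mem_univ i) h
  · by_cases hk : (k : ℕ) < (i : ℕ)
    · rw [Finset.sum_eq_zero, if_neg (fun h => by omega)]
      intro j _
      rcases lt_or_ge (j : ℕ) (i : ℕ) with hj | hj
      · simp only [Bmat, Matrix.of_apply, if_neg hi, if_pos hj, zero_mul]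
      · have hj0 : (j : ℕ) ≠ 0 := by omega
        have hkj : (k : ℕ) < (j : ℕ) := by omega
        simp only [Bmat, Matrix.map_apply, Matrix.of_apply, if_neg hj0, if_pos hkj,
          map_zero, mul_zero]
    · push_neg at hk
      have hi1 : 1 ≤ (i : ℕ) := by omega
      have hk1 : 1 ≤ (k : ℕ) := by omega
      set G : ℕ → ℂ := fun j =>
        if (i : ℕ) ≤ j ∧ j ≤ (k : ℕ) then
          ((-1:ℂ))^(j+(k:ℕ)) * ((j-1).choose ((i:ℕ)-1)) * (((k:ℕ)-1).choose (j-1))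
            * (lam^(k:ℕ) * (lam^(i:ℕ))⁻¹)
        else 0 with hGdef
      have hG : ∀ j : Fin n,
          Bmat b lam n i j * (Bmat b lam n).map (starRingEnd ℂ) j k = G (j : ℕ) := by
        intro j
        simp only [Bmat, Matrix.map_apply, Matrix.of_apply, hGdef]
        rcases lt_or_ge (j : ℕ) (i : ℕ) with hj | hj
        · rw [if_neg hi, if_pos hj, zero_mul, if_neg (by omega)]
        · have hj0 : (j : ℕ) ≠ 0 := by omega
          rw [if_neg hi, if_neg (not_lt.mpr hj), if_neg hj0]
          rcases lt_or_ge (k : ℕ) (j : ℕ) with hkj | hkj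
          · rw [if_pos hkj, map_zero, mul_zero, if_neg (by omega)]
          · rw [if_neg (not_lt.mpr hkj), if_pos ⟨hj, hkj⟩]
            simp only [map_div₀, _root_.map_mul, map_pow, map_neg, _root_.map_one,
              map_natCast, hconj, hcb]
            simp only [pow_add]
            norm_num
            field_simp
      rw [Finset.sum_congr rfl (fun j _ => hG j)]
      rw [Fin.sum_univ_eq_sum_range G n]
      have hsub : Finset.Icc (i:ℕ) (k:ℕ) ⊆ Finset.range n := by
        intro x hx
        simp only [Finset.mem_Icc] at hx
        simp only [Finset.mem_range]
        exact lt_of_le_of_lt hx.2 k.isLt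
      rw [← Finset.sum_subset hsub (fun x _ hx' => by
        simp only [Finset.mem_Icc, not_and_or, not_le] at hx'
        rw [hGdef]; exact if_neg (by omega))]
      have hstep : ∀ x ∈ Finset.Icc (i:ℕ) (k:ℕ), G x =
          ((-1:ℂ))^(x+(k:ℕ)) * ((x-1).choose ((i:ℕ)-1)) * (((k:ℕ)-1).choose (x-1))
            * (lam^(k:ℕ) * (lam^(i:ℕ))⁻¹) := by
        intro x hx
        rw [hGdef]
        exact if_pos (Finset.mem_Icc.mp hx)
      rw [Finset.sum_congr rfl hstep, ← Finset.sum_mul]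
      have hmap : Finset.Icc (i:ℕ) (k:ℕ)
          = (Finset.Icc ((i:ℕ)-1) ((k:ℕ)-1)).map (addRightEmbedding 1) := by
        rw [Finset.map_add_right_Icc]
        congr 1 <;> omega
      rw [hmap, Finset.sum_map]
      simp only [addRightEmbedding_apply, Nat.add_sub_cancel]
      have hre : ∀ m ∈ Finset.Icc ((i:ℕ)-1) ((k:ℕ)-1),
          ((-1:ℂ))^(m+1+(k:ℕ)) * (m.choose ((i:ℕ)-1)) * (((k:ℕ)-1).choose m)
            = ((-1:ℂ))^(m+((k:ℕ)-1)) * (m.choose ((i:ℕ)-1)) * (((k:ℕ)-1).choose m) := by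
        intro m _
        rw [show m+1+(k:ℕ) = (m+((k:ℕ)-1))+2 by omega, pow_add]
        norm_num
      rw [Finset.sum_congr rfl hre, key_sum ((i:ℕ)-1) ((k:ℕ)-1)]
      by_cases heq : i = k
      · rw [if_pos (by rw [heq]), if_pos heq, heq, one_mul,
          mul_inv_cancel₀ (pow_ne_zero _ hlam0)]
      · have : (i:ℕ) ≠ (k:ℕ) := fun h => heq (Fin.ext h)
        rw [if_neg (by omega), if_neg heq, zero_mul]
end

section
/- With B as defined (b_{1,1} = b, b_{1,j} = 0 for j ≥ 2, b_{i,j} = 0 for j < i, b_{i,j} = (-1)^{j+1} binom(j-2, i-2) b / λ^{i+j-2} for 2 ≤ i ≤ j, |b| = |λ| = 1), and J = J(λ, n) the Jordan block, one has B J = (conj J)⁻¹ B. -/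
open Matrix

/-- The `n × n` Jordan block with eigenvalue `λ`. -/
def jordanBlock (lam : ℂ) (n : ℕ) : Matrix (Fin n) (Fin n) ℂ :=
  Matrix.of fun i j => if (j : ℕ) = i then lam else if (j : ℕ) = i + 1 then 1 else 0

/-- Total-function version of `Bmat` on ℕ indices. -/
noncomputable def Bf (b lam : ℂ) (i j : ℕ) : ℂ :=
  if i = 0 then (if j = 0 then b else 0)
  else if j < i then 0
  else (-1) ^ (j + 2) * ((j - 1).choose (i - 1) : ℂ) * b / lam ^ (i + j)

lemma Bmat_eq_Bf (b lam : ℂ) (n : ℕ) (i j : Fin n) :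
    Bmat b lam n i j = Bf b lam (i : ℕ) (j : ℕ) := rfl

lemma Bf_zero_of_lt (b lam : ℂ) {i j : ℕ} (hi : i ≠ 0) (hj : j < i) :
    Bf b lam i j = 0 := by
  simp [Bf, hi, hj]

/-- The key entrywise identity. -/
lemma keyBf (b lam : ℂ) (hlam : lam ≠ 0) (i j : ℕ) :
    lam⁻¹ * (if 0 < j then Bf b lam i (j - 1) else 0) + lam * Bf b lam (i + 1) j
      + (if 0 < j then Bf b lam (i + 1) (j - 1) else 0) = 0 := by
  rcases j with _ | jj
  · simp [Bf]
  · simp only [Nat.succ_sub_one, if_pos (Nat.succ_pos jj)]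
    rcases i with _ | ii
    · -- i = 0
      rcases jj with _ | m
      · simp only [Bf]
        norm_num
        field_simp
        ring
      · have e1 : Bf b lam 0 (m + 1) = 0 := by simp [Bf]
        have e2 : Bf b lam 1 (m + 1 + 1) =
            (-1) ^ (m + 4) * b / lam ^ (m + 3) := by
          simp only [Bf]
          have h1 : ¬ (m + 1 + 1 < 1) := by omega
          simp only [if_neg (one_ne_zero), if_neg h1]
          norm_num
          ring_nf
        have e3 : Bf b lam 1 (m + 1) =
            (-1) ^ (m + 3) * b / lam ^ (m + 2) := by
          simp only [Bf]
          have h1 : ¬ (m + 1 < 1) := by omega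
          simp only [if_neg (one_ne_zero), if_neg h1]
          norm_num
          ring_nf
        rw [e1, e2, e3]
        field_simp
        ring
    · -- i = ii + 1
      rcases Nat.lt_or_ge jj (ii + 1) with h | h
      · -- jj ≤ ii : everything vanishes
        have e1 : Bf b lam (ii + 1) jj = 0 := Bf_zero_of_lt _ _ (by omega) (by omega)
        have e2 : Bf b lam (ii + 2) (jj + 1) = 0 := Bf_zero_of_lt _ _ (by omega) (by omega)
        have e3 : Bf b lam (ii + 2) jj = 0 := Bf_zero_of_lt _ _ (by omega) (by omega)
        simp [e1, e2, e3]
      rcases Nat.eq_or_lt_of_le h with h' | h'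
      · -- jj = ii + 1
        subst h'
        have e3 : Bf b lam (ii + 2) (ii + 1) = 0 := Bf_zero_of_lt _ _ (by omega) (by omega)
        have e1 : Bf b lam (ii + 1) (ii + 1) =
            (-1) ^ (ii + 3) * b / lam ^ (2 * ii + 2) := by
          simp only [Bf]
          have h1 : ¬ (ii + 1 < ii + 1) := by omega
          simp only [if_neg (Nat.succ_ne_zero ii), if_neg h1, Nat.add_sub_cancel,
            Nat.choose_self, Nat.cast_one]
          ring_nf
        have e2 : Bf b lam (ii + 2) (ii + 1 + 1) =
            (-1) ^ (ii + 4) * b / lam ^ (2 * ii + 4) := by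
          simp only [Bf]
          have h1 : ¬ (ii + 1 + 1 < ii + 2) := by omega
          simp only [if_neg (Nat.succ_ne_zero _), if_neg h1,
            show ii + 1 + 1 - 1 = ii + 1 from rfl, show ii + 2 - 1 = ii + 1 from rfl,
            Nat.choose_self, Nat.cast_one]
          ring_nf
        rw [e1, e2, e3]
        field_simp
        ring
      · -- jj ≥ ii + 2
        obtain ⟨m, rfl⟩ : ∃ m, jj = ii + 2 + m := ⟨jj - (ii + 2), by omega⟩
        simp only [Bf]
        have h1 : ¬ (ii + 2 + m < ii + 1) := by omega
        have h2 : ¬ (ii + 2 + m + 1 < ii + 2) := by omega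
        have h3 : ¬ (ii + 2 + m < ii + 2) := by omega
        simp only [if_neg h1, if_neg h2, if_neg h3, if_neg (Nat.succ_ne_zero _)]
        have c1 : ii + 2 + m - 1 = ii + 1 + m := by omega
        have c2 : ii + 1 - 1 = ii := by omega
        have c3 : ii + 2 + m + 1 - 1 = ii + 2 + m := by omega
        have c4 : ii + 2 - 1 = ii + 1 := by omega
        rw [c1, c2, c3, c4]
        have pascal : (ii + 2 + m).choose (ii + 1)
            = (ii + 1 + m).choose ii + (ii + 1 + m).choose (ii + 1) := by
          have := Nat.choose_succ_succ (ii + 1 + m) ii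
          simpa [show ii + 1 + m + 1 = ii + 2 + m by omega] using this
        rw [pascal]
        push_cast
        field_simp
        ring

lemma sumL {n : ℕ} (a : ℂ) (i : Fin n) (f : Fin n → ℂ) :
    (∑ k : Fin n, (if (k : ℕ) = (i : ℕ) then a
        else if (k : ℕ) = (i : ℕ) + 1 then (1 : ℂ) else 0) * f k)
      = a * f i + (if h : (i : ℕ) + 1 < n then f ⟨(i : ℕ) + 1, h⟩ else 0) := by
  by_cases h : (i : ℕ) + 1 < n
  · rw [dif_pos h]
    have key : ∀ k : Fin n,
        (if (k : ℕ) = (i : ℕ) then a else if (k : ℕ) = (i : ℕ) + 1 then (1 : ℂ) else 0) * f k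
          = (if k = i then a * f k else 0)
            + (if k = (⟨(i : ℕ) + 1, h⟩ : Fin n) then f k else 0) := by
      intro k
      by_cases hk1 : (k : ℕ) = (i : ℕ)
      · have e1 : k = i := Fin.ext hk1
        have e2 : k ≠ (⟨(i : ℕ) + 1, h⟩ : Fin n) := Fin.ne_of_val_ne (by simp; omega)
        rw [if_pos hk1, if_pos e1, if_neg e2]; ring
      · by_cases hk2 : (k : ℕ) = (i : ℕ) + 1
        · have e1 : k ≠ i := Fin.ne_of_val_ne (by omega)
          have e2 : k = (⟨(i : ℕ) + 1, h⟩ : Fin n) := Fin.ext (by simp; omega)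
          rw [if_neg hk1, if_pos hk2, if_neg e1, if_pos e2]; ring
        · have e1 : k ≠ i := Fin.ne_of_val_ne (by omega)
          have e2 : k ≠ (⟨(i : ℕ) + 1, h⟩ : Fin n) := Fin.ne_of_val_ne (by simp; omega)
          rw [if_neg hk1, if_neg hk2, if_neg e1, if_neg e2]; ring
    rw [Finset.sum_congr rfl fun k _ => key k, Finset.sum_add_distrib,
      Finset.sum_ite_eq' Finset.univ, Finset.sum_ite_eq' Finset.univ]
    simp
  · rw [dif_neg h]
    have key : ∀ k : Fin n,
        (if (k : ℕ) = (i : ℕ) then a else if (k : ℕ) = (i : ℕ) + 1 then (1 : ℂ) else 0) * f k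
          = (if k = i then a * f k else 0) := by
      intro k
      have hk2 : (k : ℕ) ≠ (i : ℕ) + 1 := by have := k.isLt; omega
      by_cases hk1 : (k : ℕ) = (i : ℕ)
      · have e1 : k = i := Fin.ext hk1
        rw [if_pos hk1, if_pos e1]
      · have e1 : k ≠ i := Fin.ne_of_val_ne (by omega)
        rw [if_neg hk1, if_neg hk2, if_neg e1]; ring
    rw [Finset.sum_congr rfl fun k _ => key k, Finset.sum_ite_eq' Finset.univ]
    simp

lemma sumR {n : ℕ} (lam : ℂ) (j : Fin n) (f : Fin n → ℂ) :
    (∑ l : Fin n, f l * (if (j : ℕ) = (l : ℕ) then lam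
        else if (j : ℕ) = (l : ℕ) + 1 then (1 : ℂ) else 0))
      = lam * f j + (if h : 0 < (j : ℕ) then
          f ⟨(j : ℕ) - 1, Nat.lt_of_le_of_lt (Nat.sub_le _ _) j.isLt⟩ else 0) := by
  by_cases h : 0 < (j : ℕ)
  · rw [dif_pos h]
    set j' : Fin n := ⟨(j : ℕ) - 1, Nat.lt_of_le_of_lt (Nat.sub_le _ _) j.isLt⟩ with hj'
    have hj'v : (j' : ℕ) = (j : ℕ) - 1 := rfl
    have key : ∀ l : Fin n,
        f l * (if (j : ℕ) = (l : ℕ) then lam else if (j : ℕ) = (l : ℕ) + 1 then (1 : ℂ) else 0)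
          = (if l = j then lam * f l else 0) + (if l = j' then f l else 0) := by
      intro l
      by_cases hl1 : (j : ℕ) = (l : ℕ)
      · have e1 : l = j := Fin.ext hl1.symm
        have e2 : l ≠ j' := Fin.ne_of_val_ne (by rw [hj'v]; omega)
        rw [if_pos hl1, if_pos e1, if_neg e2]; ring
      · by_cases hl2 : (j : ℕ) = (l : ℕ) + 1
        · have e1 : l ≠ j := Fin.ne_of_val_ne (by omega)
          have e2 : l = j' := Fin.ext (by rw [hj'v]; omega)
          rw [if_neg hl1, if_pos hl2, if_neg e1, if_pos e2]; ring
        · have e1 : l ≠ j := Fin.ne_of_val_ne (by omega)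
          have e2 : l ≠ j' := Fin.ne_of_val_ne (by rw [hj'v]; omega)
          rw [if_neg hl1, if_neg hl2, if_neg e1, if_neg e2]; ring
    rw [Finset.sum_congr rfl fun l _ => key l, Finset.sum_add_distrib,
      Finset.sum_ite_eq' Finset.univ, Finset.sum_ite_eq' Finset.univ]
    simp
  · rw [dif_neg h]
    have hj0 : (j : ℕ) = 0 := by omega
    have key : ∀ l : Fin n,
        f l * (if (j : ℕ) = (l : ℕ) then lam else if (j : ℕ) = (l : ℕ) + 1 then (1 : ℂ) else 0)
          = (if l = j then lam * f l else 0) := by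
      intro l
      have hl2 : ¬ ((j : ℕ) = (l : ℕ) + 1) := by omega
      by_cases hl1 : (j : ℕ) = (l : ℕ)
      · have e1 : l = j := Fin.ext hl1.symm
        rw [if_pos hl1, if_pos e1]; ring
      · have e1 : l ≠ j := Fin.ne_of_val_ne (by omega)
        rw [if_neg hl1, if_neg hl2, if_neg e1]; ring
    rw [Finset.sum_congr rfl fun l _ => key l, Finset.sum_ite_eq' Finset.univ]
    simp

/-- With `|b| = |λ| = 1` and `J = J(λ, n)`, one has `B J = (conj J)⁻¹ B`. -/
theorem Bmat_intertwines_jordanBlock (n : ℕ) (b lam : ℂ)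
    (hb : ‖b‖ = 1) (hlam : ‖lam‖ = 1) :
    Bmat b lam n * jordanBlock lam n =
      ((jordanBlock lam n).map (starRingEnd ℂ))⁻¹ * Bmat b lam n := by
  have hlam0 : lam ≠ 0 := by
    intro h; rw [h] at hlam; simp at hlam
  have hinv : lam⁻¹ * lam = 1 := inv_mul_cancel₀ hlam0
  have hconj : (starRingEnd ℂ) lam = lam⁻¹ := by
    have h1 : lam * (starRingEnd ℂ) lam = 1 := by
      rw [Complex.mul_conj, Complex.normSq_eq_norm_sq, hlam]
      norm_num
    field_simp at h1 ⊢
    linear_combination h1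
  set M := (jordanBlock lam n).map (starRingEnd ℂ) with hM
  have hMentry : ∀ i k : Fin n, M i k =
      (if (k : ℕ) = (i : ℕ) then lam⁻¹ else if (k : ℕ) = (i : ℕ) + 1 then (1 : ℂ) else 0) := by
    intro i k
    simp only [hM, Matrix.map_apply, jordanBlock, Matrix.of_apply]
    split_ifs <;> simp [hconj]
  -- upper triangularity and invertibility of M
  have htri : M.BlockTriangular id := by
    intro i k hk
    simp only [id] at hk
    rw [hMentry]
    have hlt : (k : ℕ) < (i : ℕ) := hk
    have h1 : (k : ℕ) ≠ (i : ℕ) := by omega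
    have h2 : (k : ℕ) ≠ (i : ℕ) + 1 := by omega
    simp [h1, h2]
  have hdet : IsUnit M.det := by
    rw [Matrix.det_of_upperTriangular htri]
    have hd : ∀ i : Fin n, M i i = lam⁻¹ := by
      intro i; rw [hMentry]; simp
    rw [Finset.prod_congr rfl fun i _ => hd i, Finset.prod_const]
    simp [isUnit_iff_ne_zero, hlam0]
  -- main computation: M * (B * J) = B
  have hmain : M * (Bmat b lam n * jordanBlock lam n) = Bmat b lam n := by
    ext i j
    rw [Matrix.mul_apply]
    have step1 : ∀ k : Fin n, (Bmat b lam n * jordanBlock lam n) k j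
        = lam * Bf b lam k j + (if h : 0 < (j : ℕ) then
            Bf b lam k ((j : ℕ) - 1) else 0) := by
      intro k
      rw [Matrix.mul_apply]
      have hh := sumR lam j (fun l => Bmat b lam n k l)
      simp only [jordanBlock, Matrix.of_apply] at hh ⊢
      rw [hh]
      simp only [Bmat_eq_Bf]
    have hsum : (∑ k : Fin n, M i k * (Bmat b lam n * jordanBlock lam n) k j)
        = lam⁻¹ * (Bmat b lam n * jordanBlock lam n) i j
          + (if h : (i : ℕ) + 1 < n then
              (Bmat b lam n * jordanBlock lam n) ⟨(i : ℕ) + 1, h⟩ j else 0) := by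
      rw [Finset.sum_congr rfl fun k _ => by rw [hMentry]]
      exact sumL lam⁻¹ i (fun k => (Bmat b lam n * jordanBlock lam n) k j)
    rw [hsum, step1 i, Bmat_eq_Bf]
    have key := keyBf b lam hlam0 (i : ℕ) (j : ℕ)
    by_cases h1 : (i : ℕ) + 1 < n
    · rw [dif_pos h1, step1 ⟨(i : ℕ) + 1, h1⟩]
      simp only [Fin.val_mk]
      by_cases h2 : 0 < (j : ℕ)
      · simp only [dif_pos h2] at *
        simp only [if_pos h2] at key
        linear_combination key + Bf b lam (i : ℕ) (j : ℕ) * hinv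
      · simp only [dif_neg h2] at *
        simp only [if_neg h2] at key
        linear_combination key + Bf b lam (i : ℕ) (j : ℕ) * hinv
    · rw [dif_neg h1]
      have hz1 : Bf b lam ((i : ℕ) + 1) (j : ℕ) = 0 :=
        Bf_zero_of_lt _ _ (by omega) (by have := j.isLt; omega)
      have hz2 : Bf b lam ((i : ℕ) + 1) ((j : ℕ) - 1) = 0 :=
        Bf_zero_of_lt _ _ (by omega) (by have := j.isLt; omega)
      rw [hz1, hz2] at key
      by_cases h2 : 0 < (j : ℕ)
      · simp only [dif_pos h2] at *
        simp only [if_pos h2] at key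
        linear_combination key + Bf b lam (i : ℕ) (j : ℕ) * hinv
      · simp only [dif_neg h2] at *
        simp only [if_neg h2] at key
        linear_combination key + Bf b lam (i : ℕ) (j : ℕ) * hinv
  calc Bmat b lam n * jordanBlock lam n
      = 1 * (Bmat b lam n * jordanBlock lam n) := by rw [Matrix.one_mul]
    _ = M⁻¹ * M * (Bmat b lam n * jordanBlock lam n) := by
        rw [Matrix.nonsing_inv_mul _ hdet]
    _ = M⁻¹ * (M * (Bmat b lam n * jordanBlock lam n)) := by rw [Matrix.mul_assoc]
    _ = M⁻¹ * Bmat b lam n := by rw [hmain]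
end

section
/- Every element of SL(n, ℂ) all of whose eigenvalues have modulus one is c-reversible: it is conjugate to the inverse of its entrywise complex conjugate. -/
open Matrix

section Aux

open Polynomial

noncomputable section

/-- Jordan-type block: `ℂ[X] ⧸ ((X - λ)^e)`. -/
abbrev Kblk (lam : ℂ) (e : ℕ) : Type := AdjoinRoot ((X - C lam) ^ e)

noncomputable instance (q : ℂ[X]) : Algebra ℂ[X] (AdjoinRoot q) := Ideal.Quotient.algebra ℂ[X]

instance (q : ℂ[X]) : IsScalarTower ℂ ℂ[X] (AdjoinRoot q) :=
  IsScalarTower.of_algebraMap_eq fun c => by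
    rw [AdjoinRoot.algebraMap_eq, AdjoinRoot.of]; rfl

lemma algebraMap_adjoinRoot (q g : ℂ[X]) :
    algebraMap ℂ[X] (AdjoinRoot q) g = AdjoinRoot.mk q g := rfl

lemma X_smul_adjoinRoot (q : ℂ[X]) (z : AdjoinRoot q) :
    (X : ℂ[X]) • z = AdjoinRoot.root q * z := Algebra.smul_def _ z

namespace Kblk

variable (lam : ℂ) (e : ℕ)

lemma nilp : (AdjoinRoot.root ((X - C lam) ^ e) - algebraMap ℂ _ lam) ^ e = 0 := by
  have : AdjoinRoot.root ((X - C lam) ^ e) - algebraMap ℂ _ lam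
      = AdjoinRoot.mk _ (X - C lam) := by
    rw [map_sub, AdjoinRoot.mk_X, AdjoinRoot.algebraMap_eq, AdjoinRoot.mk_C]
  rw [this, ← map_pow, AdjoinRoot.mk_self]

lemma isUnit_root (hlam : lam ≠ 0) : IsUnit (AdjoinRoot.root ((X - C lam) ^ e)) := by
  have h1 : IsUnit (algebraMap ℂ (Kblk lam e) lam) :=
    (isUnit_iff_ne_zero.2 hlam).map _
  have h2 : IsNilpotent (AdjoinRoot.root ((X - C lam) ^ e) - algebraMap ℂ _ lam) :=
    ⟨e, nilp lam e⟩
  have := h2.isUnit_add_right_of_commute h1 (Commute.all _ _)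
  simpa using this

instance : FiniteDimensional ℂ (Kblk lam e) :=
  PowerBasis.finite (AdjoinRoot.powerBasis (pow_ne_zero _ (X_sub_C_ne_zero lam)))

lemma finrank_eq : Module.finrank ℂ (Kblk lam e) = e := by
  rw [(AdjoinRoot.powerBasis (pow_ne_zero _ (X_sub_C_ne_zero lam))).finrank]
  simp [natDegree_pow]

lemma subsingleton_zero (lam : ℂ) : Subsingleton (Kblk lam 0) := by
  have : (1 : Kblk lam 0) = 0 := by
    have := AdjoinRoot.mk_self (f := ((X - C lam) ^ 0 : ℂ[X]))
    simpa using this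
  exact subsingleton_of_zero_eq_one this.symm

lemma key_inv (mu : ℂ) (hmu : mu ≠ 0) (e : ℕ) :
    ∃ Ξ : Kblk mu e ≃ₗ[ℂ] Kblk mu⁻¹ e, ∀ w : Kblk mu e,
      Ξ w = AdjoinRoot.root _ * Ξ (AdjoinRoot.root _ * w) := by
  set q : ℂ[X] := (X - C mu) ^ e with hq
  have hru : IsUnit (AdjoinRoot.root q) := isUnit_root mu e hmu
  set r := hru.unit with hr
  set x : Kblk mu e := ↑r⁻¹ with hx
  have hxr : x * (AdjoinRoot.root q) = 1 := by
    rw [hx]; exact_mod_cast r.inv_mul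
  have hrx : (AdjoinRoot.root q) * x = 1 := by
    rw [hx]; exact_mod_cast r.mul_inv
  have h0 : aeval x ((X - C mu⁻¹) ^ e) = 0 := by
    have hmm : algebraMap ℂ (Kblk mu e) mu⁻¹ * algebraMap ℂ _ mu = 1 := by
      rw [← _root_.map_mul, inv_mul_cancel₀ hmu, _root_.map_one]
    have hc : (x - algebraMap ℂ _ mu⁻¹)
        = (x * algebraMap ℂ _ mu⁻¹) * (algebraMap ℂ _ mu - AdjoinRoot.root q) := by
      linear_combination (-x) * hmm + (algebraMap ℂ (Kblk mu e) mu⁻¹) * hxr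
    rw [map_pow, map_sub, aeval_X, aeval_C]
    rw [hc, mul_pow]
    have h2 : (algebraMap ℂ (Kblk mu e) mu - AdjoinRoot.root q) ^ e = 0 := by
      have h3 : (algebraMap ℂ (Kblk mu e) mu - AdjoinRoot.root q)
          = -(AdjoinRoot.root q - algebraMap ℂ _ mu) := by ring
      rw [h3, neg_pow, nilp, mul_zero]
    rw [h2, mul_zero]
  set Φ : AdjoinRoot ((X - C mu⁻¹) ^ e) →ₐ[ℂ] Kblk mu e :=
    AdjoinRoot.liftAlgHom _ (Algebra.ofId ℂ _) x h0 with hΦ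
  have hΦroot : Φ (AdjoinRoot.root _) = x := AdjoinRoot.liftAlgHom_root _ _ _ _
  have hΦmul : ∀ y, Φ (AdjoinRoot.root _ * y) = x * Φ y := by
    intro y; rw [_root_.map_mul, hΦroot]
  have hsurj : Function.Surjective Φ := by
    have hrmem : AdjoinRoot.root q ∈ Φ.range := by
      set S : Submodule ℂ (Kblk mu e) := Subalgebra.toSubmodule Φ.range with hS
      have hxS : x ∈ S := ⟨AdjoinRoot.root _, hΦroot⟩
      have h1S : (1 : Kblk mu e) ∈ S := Φ.range.one_mem
      have hmapsto : ∀ s ∈ S, x * s ∈ S := fun s hs => Φ.range.mul_mem hxS hs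
      set T : S →ₗ[ℂ] S := LinearMap.restrict (LinearMap.mulLeft ℂ x)
        (fun s hs => hmapsto s hs) with hT
      have hTinj : Function.Injective T := by
        intro a b hab
        have : x * (a : Kblk mu e) = x * b := congrArg Subtype.val hab
        have := congrArg (fun z => (AdjoinRoot.root q) * z) this
        simp only [← mul_assoc, hrx, one_mul] at this
        exact Subtype.ext this
      have hTsurj : Function.Surjective T :=
        LinearMap.surjective_of_injective hTinj
      obtain ⟨t, ht⟩ := hTsurj ⟨1, h1S⟩
      have hxt : x * (t : Kblk mu e) = 1 := congrArg Subtype.val ht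
      have : (t : Kblk mu e) = AdjoinRoot.root q := by
        have := congrArg (fun z => (AdjoinRoot.root q) * z) hxt
        simp only [← mul_assoc, hrx, one_mul, mul_one] at this
        exact this
      exact this ▸ t.2
    have : Φ.range = ⊤ := by
      rw [eq_top_iff, ← AdjoinRoot.adjoinRoot_eq_top (f := q)]
      exact Algebra.adjoin_le (Set.singleton_subset_iff.mpr hrmem)
    intro z
    have hz : z ∈ Φ.range := this ▸ Algebra.mem_top
    exact hz
  have hinj : Function.Injective Φ := by
    have := LinearMap.injective_iff_surjective_of_finrank_eq_finrank
      (f := Φ.toLinearMap) (by rw [finrank_eq, finrank_eq])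
    exact this.mpr hsurj
  set Ξ' : AdjoinRoot ((X - C mu⁻¹) ^ e) ≃ₗ[ℂ] Kblk mu e :=
    LinearEquiv.ofBijective Φ.toLinearMap ⟨hinj, hsurj⟩ with hΞ'
  have hΞ'apply : ∀ y, Ξ' y = Φ y := fun y => rfl
  refine ⟨Ξ'.symm, fun w => ?_⟩
  apply Ξ'.injective
  rw [Ξ'.apply_symm_apply]
  have : Ξ' (AdjoinRoot.root ((X - C mu⁻¹) ^ e) * Ξ'.symm (AdjoinRoot.root q * w))
      = x * (AdjoinRoot.root q * w) := by
    rw [hΞ'apply, hΦmul, ← hΞ'apply, Ξ'.apply_symm_apply]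
  rw [this, ← mul_assoc, hxr, one_mul]

lemma key_inv' (mu nu : ℂ) (hmu : mu ≠ 0) (hnu : mu⁻¹ = nu) (e : ℕ) :
    ∃ Ξ : Kblk mu e ≃ₗ[ℂ] Kblk nu e, ∀ w : Kblk mu e,
      Ξ w = AdjoinRoot.root _ * Ξ (AdjoinRoot.root _ * w) := by
  subst hnu
  exact key_inv mu hmu e

end Kblk

lemma glue (b : ℂ[X]) (lam : ℂ) (e : ℕ) (hassoc : Associated ((X - C lam) ^ e) b) :
    Nonempty ((ℂ[X] ⧸ (ℂ[X] ∙ b)) ≃ₗ[ℂ[X]] Kblk lam e) := by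
  set q : ℂ[X] := (X - C lam) ^ e with hq
  have hqb : q ∣ b := hassoc.dvd
  have hbq : b ∣ q := hassoc.symm.dvd
  have hker : (ℂ[X] ∙ b) ≤ LinearMap.ker (Algebra.linearMap ℂ[X] (Kblk lam e)) := by
    rw [Submodule.span_le, Set.singleton_subset_iff]
    simp only [SetLike.mem_coe, LinearMap.mem_ker, Algebra.linearMap_apply]
    rw [algebraMap_adjoinRoot]
    exact (AdjoinRoot.mk_eq_zero).mpr hqb
  set G0 := Submodule.liftQ _ _ hker with hG0
  have hmk : ∀ g : ℂ[X], G0 (Submodule.Quotient.mk g) = AdjoinRoot.mk q g := fun g => rfl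
  have hsurj : Function.Surjective G0 := by
    intro z
    obtain ⟨g, rfl⟩ := AdjoinRoot.mk_surjective z
    exact ⟨Submodule.Quotient.mk g, hmk g⟩
  have hinj : Function.Injective G0 := by
    rw [← LinearMap.ker_eq_bot, LinearMap.ker_eq_bot']
    intro m hm
    obtain ⟨g, rfl⟩ := Submodule.Quotient.mk_surjective _ m
    rw [hmk] at hm
    have : q ∣ g := (AdjoinRoot.mk_eq_zero).mp hm
    have hbg : b ∣ g := hbq.trans this
    rw [Submodule.Quotient.mk_eq_zero]
    obtain ⟨c, rfl⟩ := hbg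
    have : b * c = c • b := by rw [smul_eq_mul, mul_comm]
    rw [this]
    exact Submodule.smul_mem _ c (Submodule.mem_span_singleton_self b)
  exact ⟨LinearEquiv.ofBijective G0 ⟨hinj, hsurj⟩⟩

lemma assoc_X_sub_C {p : ℂ[X]} (hp : Irreducible p) : ∃ lam : ℂ, Associated (X - C lam) p := by
  have hdeg : p.degree = 1 := IsAlgClosed.degree_eq_one_of_irreducible ℂ hp
  set a := p.leadingCoeff with halc
  have ha : a ≠ 0 := leadingCoeff_ne_zero.mpr hp.ne_zero
  have hu : IsUnit (C a : ℂ[X]) := isUnit_C.mpr (isUnit_iff_ne_zero.mpr ha)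
  refine ⟨-(p.coeff 0) / a, ⟨hu.unit, ?_⟩⟩
  have hp1 : p = C a * X + C (p.coeff 0) := eq_X_add_C_of_degree_eq_one hdeg
  have hus : (hu.unit : ℂ[X]) = C a := IsUnit.unit_spec hu
  rw [hus]
  calc (X - C (-(p.coeff 0) / a)) * C a
      = C a * X - C (-(p.coeff 0) / a * a) := by rw [C_mul]; ring
    _ = C a * X + C (p.coeff 0) := by rw [div_mul_cancel₀ _ ha, map_neg, sub_neg_eq_add]
    _ = p := hp1.symm

local notation "conj" => starRingEnd ℂ

def conjHomAux (mu lam : ℂ) (e : ℕ) (h : conj lam = mu) :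
    Kblk lam e →+* Kblk mu e := by
  refine AdjoinRoot.lift ((AdjoinRoot.of ((X - C mu) ^ e)).comp (conj : ℂ →+* ℂ))
    (AdjoinRoot.root ((X - C mu) ^ e)) ?_
  rw [eval₂_pow, eval₂_sub, eval₂_X, eval₂_C, RingHom.comp_apply]
  show (AdjoinRoot.root _ - AdjoinRoot.of _ (conj lam)) ^ e = 0
  rw [h]
  have : AdjoinRoot.root ((X - C mu) ^ e) - AdjoinRoot.of _ mu
      = AdjoinRoot.mk _ (X - C mu) := by
    rw [← AdjoinRoot.algebraMap_eq, map_sub, AdjoinRoot.mk_X, AdjoinRoot.algebraMap_eq,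
      AdjoinRoot.mk_C]
  rw [this, ← map_pow, AdjoinRoot.mk_self]

lemma conjHomAux_root (mu lam : ℂ) (e : ℕ) (h : conj lam = mu) :
    conjHomAux mu lam e h (AdjoinRoot.root _) = AdjoinRoot.root _ :=
  AdjoinRoot.lift_root _

lemma conjHomAux_of (mu lam : ℂ) (e : ℕ) (h : conj lam = mu) (c : ℂ) :
    conjHomAux mu lam e h (AdjoinRoot.of _ c) = AdjoinRoot.of _ (conj c) :=
  AdjoinRoot.lift_of _

lemma conjHomAux_comp_self (mu lam : ℂ) (e : ℕ) (h : conj lam = mu) (h2 : conj mu = lam)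
    (z : Kblk lam e) :
    conjHomAux lam mu e h2 (conjHomAux mu lam e h z) = z := by
  have : ((conjHomAux lam mu e h2).comp
      (conjHomAux mu lam e h)) = RingHom.id _ := by
    apply Ideal.Quotient.ringHom_ext
    apply Polynomial.ringHom_ext
    · intro a
      show conjHomAux lam mu e h2 (conjHomAux mu lam e h (AdjoinRoot.of _ a)) = AdjoinRoot.of _ a
      rw [conjHomAux_of mu lam e h, conjHomAux_of lam mu e h2, Complex.conj_conj]
    · show conjHomAux lam mu e h2 (conjHomAux mu lam e h (AdjoinRoot.root _)) = AdjoinRoot.root _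
      rw [conjHomAux_root mu lam e h, conjHomAux_root lam mu e h2]
  exact DFunLike.congr_fun this z

lemma conjHomAux_smul (mu lam : ℂ) (e : ℕ) (h : conj lam = mu) (c : ℂ) (z : Kblk lam e) :
    conjHomAux mu lam e h (c • z) = conj c • conjHomAux mu lam e h z := by
  rw [Algebra.smul_def, Algebra.smul_def, _root_.map_mul]
  congr 1
  rw [AdjoinRoot.algebraMap_eq, AdjoinRoot.algebraMap_eq]
  exact conjHomAux_of mu lam e h c

/-- The combined block equivalence: inverse-of-root action on the conjugate block
is equivalent to root action on the original block. -/
lemma block_final (lam : ℂ) (e : ℕ) (h1 : e ≠ 0 → ‖lam‖ = 1) :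
    ∃ Ξ : Kblk (conj lam) e ≃ₗ[ℂ] Kblk lam e,
      ∀ w, Ξ w = AdjoinRoot.root _ * Ξ (AdjoinRoot.root _ * w) := by
  by_cases he : e = 0
  · subst he
    haveI := Kblk.subsingleton_zero (conj lam)
    haveI := Kblk.subsingleton_zero lam
    refine ⟨LinearEquiv.ofBijective 0
      ⟨fun a b _ => Subsingleton.elim a b, fun z => ⟨0, Subsingleton.elim _ _⟩⟩,
      fun w => Subsingleton.elim _ _⟩
  · have habs : ‖lam‖ = 1 := h1 he
    have hlam0 : lam ≠ 0 := by
      intro h0; rw [h0] at habs; simp at habs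
    have hmu0 : conj lam ≠ 0 := by
      simpa using hlam0
    have hinv : (conj lam)⁻¹ = lam := by
      have : conj lam * lam = 1 := by
        rw [mul_comm, Complex.mul_conj]
        norm_cast
        rw [← Complex.sq_norm, habs]; norm_num
      field_simp at this ⊢
      rw [← this]
    exact Kblk.key_inv' (conj lam) lam hmu0 hinv e

lemma decomp (n : ℕ) (A : Matrix (Fin n) (Fin n) ℂ) :
    ∃ (ι : Type) (_ : Fintype ι) (lam : ι → ℂ) (e : ι → ℕ)
      (g : (Fin n → ℂ) ≃ₗ[ℂ] DirectSum ι (fun i => Kblk (lam i) (e i))),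
      (∀ i, e i ≠ 0 → ∃ v : Fin n → ℂ, v ≠ 0 ∧ A.mulVec v = lam i • v) ∧
      (∀ v, g (A.mulVec v) = (X : ℂ[X]) • g v) := by
  classical
  set fA : (Fin n → ℂ) →ₗ[ℂ] (Fin n → ℂ) := Matrix.toLinAlgEquiv' A with hfA
  have hfAv : ∀ v, fA v = A.mulVec v := fun v => rfl
  have tor : Module.IsTorsion ℂ[X] (Module.AEval' fA) := by
    intro m
    refine ⟨⟨A.charpoly, mem_nonZeroDivisors_of_ne_zero A.charpoly_monic.ne_zero⟩, ?_⟩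
    have h0 : aeval fA A.charpoly = 0 := by
      rw [hfA, Polynomial.aeval_algHom_apply, Matrix.aeval_self_charpoly, map_zero]
    apply (Module.AEval.of ℂ (Fin n → ℂ) fA).symm.injective
    show (Module.AEval.of ℂ (Fin n → ℂ) fA).symm (A.charpoly • m) = _
    rw [Module.AEval.of_symm_smul, h0, map_zero]
    simp
  obtain ⟨ι, hfin, p, hp, e, ⟨ψ⟩⟩ := Module.equiv_directSum_of_isTorsion tor
  choose lam hlam using fun i => assoc_X_sub_C (hp i)
  have hassoc : ∀ i, Associated ((X - C (lam i)) ^ e i) (p i ^ e i) :=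
    fun i => (hlam i).pow_pow
  let G : ∀ i, (ℂ[X] ⧸ (ℂ[X] ∙ p i ^ e i)) ≃ₗ[ℂ[X]] Kblk (lam i) (e i) :=
    fun i => (glue _ _ _ (hassoc i)).some
  let Gmap : (DirectSum ι (fun i => ℂ[X] ⧸ (ℂ[X] ∙ p i ^ e i))) ≃ₗ[ℂ[X]]
      DirectSum ι (fun i => Kblk (lam i) (e i)) :=
    DFinsupp.mapRange.linearEquiv G
  let ψ₂ := ψ.trans Gmap
  let g : (Fin n → ℂ) ≃ₗ[ℂ] DirectSum ι (fun i => Kblk (lam i) (e i)) :=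
    (Module.AEval.of ℂ (Fin n → ℂ) fA).trans (ψ₂.restrictScalars ℂ)
  have hint : ∀ v, g (A.mulVec v) = (X : ℂ[X]) • g v := by
    intro v
    have h1 : Module.AEval.of ℂ (Fin n → ℂ) fA (A.mulVec v)
        = (X : ℂ[X]) • Module.AEval.of ℂ (Fin n → ℂ) fA v := by
      rw [← hfAv, Module.AEval.X_smul_of]
      rfl
    show ψ₂ (Module.AEval.of ℂ (Fin n → ℂ) fA (A.mulVec v)) = _
    rw [h1, _root_.map_smul]
    rfl
  refine ⟨ι, hfin, lam, e, g, ?_, hint⟩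
  intro i hei
  set d : ℂ[X] := X - C (lam i) with hd
  set x : Kblk (lam i) (e i) := AdjoinRoot.mk _ (d ^ (e i - 1)) with hx
  have hx0 : x ≠ 0 := by
    rw [hx, Ne, AdjoinRoot.mk_eq_zero]
    intro hdvd
    have h1 : (d ^ e i).natDegree ≤ (d ^ (e i - 1)).natDegree :=
      Polynomial.natDegree_le_of_dvd hdvd (pow_ne_zero _ (X_sub_C_ne_zero _))
    rw [Polynomial.natDegree_pow, Polynomial.natDegree_pow, natDegree_X_sub_C] at h1
    omega
  have hXx : (X : ℂ[X]) • x = lam i • x := by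
    rw [X_smul_adjoinRoot]
    have h2 : (AdjoinRoot.root _ - algebraMap ℂ _ (lam i)) * x = 0 := by
      rw [hx]
      have : (AdjoinRoot.root ((X - C (lam i)) ^ e i) - algebraMap ℂ _ (lam i))
          = AdjoinRoot.mk _ d := by
        simp [hd, map_sub, AdjoinRoot.mk_X, AdjoinRoot.mk_C, AdjoinRoot.algebraMap_eq]
      rw [this, ← _root_.map_mul, ← pow_succ']
      have he : e i - 1 + 1 = e i := Nat.succ_pred_eq_of_pos (Nat.pos_of_ne_zero hei)
      rw [he, AdjoinRoot.mk_self]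
    have h2' : AdjoinRoot.root ((X - C (lam i)) ^ e i) * x
        - algebraMap ℂ (Kblk (lam i) (e i)) (lam i) * x = 0 := by
      rw [← sub_mul]; exact h2
    have h3 : AdjoinRoot.root ((X - C (lam i)) ^ e i) * x
        = algebraMap ℂ (Kblk (lam i) (e i)) (lam i) * x := sub_eq_zero.mp h2'
    rw [h3, ← Algebra.smul_def]
  set s : DirectSum ι (fun i => Kblk (lam i) (e i)) := DFinsupp.single i x with hs
  refine ⟨g.symm s, fun h0 => ?_, ?_⟩
  · have hs0 : s = 0 := by rw [← g.apply_symm_apply s, h0, map_zero]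
    rw [hs] at hs0
    exact hx0 (by rwa [DFinsupp.single_eq_zero] at hs0)
  · apply g.injective
    rw [hint, LinearEquiv.apply_symm_apply, _root_.map_smul, LinearEquiv.apply_symm_apply, hs]
    calc (X : ℂ[X]) • (DFinsupp.single i x : DirectSum ι fun j => Kblk (lam j) (e j))
        = DFinsupp.single i ((X : ℂ[X]) • x) := (DFinsupp.single_smul _ _).symm
      _ = DFinsupp.single i (lam i • x) := by rw [hXx]
      _ = lam i • (DFinsupp.single i x : DirectSum ι fun j => Kblk (lam j) (e j)) :=
          DFinsupp.single_smul _ _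

end
end Aux

open Polynomial

local notation "conj" => starRingEnd ℂ

/-- Every element of `SL(n, ℂ)` all of whose eigenvalues have modulus one is
c-reversible: it is conjugate to the inverse of its entrywise conjugate. -/
theorem unit_modulus_spectrum_c_reversible
    (n : ℕ) (A : Matrix (Fin n) (Fin n) ℂ) (hA : A.det = 1)
    (hspec : ∀ lam ∈ spectrum ℂ A, ‖lam‖ = 1) :
    ∃ P : Matrix (Fin n) (Fin n) ℂ, IsUnit P ∧
      P * A * P⁻¹ = (A.map (starRingEnd ℂ))⁻¹ := by
  classical
  set Am : Matrix (Fin n) (Fin n) ℂ := A.map (starRingEnd ℂ) with hAm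
  have hdetAm : Am.det = 1 := by
    have h := RingHom.map_det (starRingEnd ℂ) A
    rw [hA, _root_.map_one] at h
    exact h.symm
  have hAmUnit : IsUnit Am.det := by rw [hdetAm]; exact isUnit_one
  set B : Matrix (Fin n) (Fin n) ℂ := Am⁻¹ with hB
  have hAmB : Am * B = 1 := Matrix.mul_nonsing_inv _ hAmUnit
  have hstar : ∀ w : Fin n → ℂ, Am.mulVec w = star (A.mulVec (star w)) := by
    intro w; funext i
    simp only [Matrix.mulVec, dotProduct, Pi.star_apply, hAm, Matrix.map_apply]
    rw [star_sum]
    refine Finset.sum_congr rfl fun j _ => ?_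
    rw [star_mul', star_star]
    rfl
  obtain ⟨ι, hfin, lam, e, g, heig, hint⟩ := decomp n A
  have habs : ∀ i, e i ≠ 0 → ‖lam i‖ = 1 := by
    intro i hei
    obtain ⟨v, hv0, hAv⟩ := heig i hei
    apply hspec
    have h1 : spectrum ℂ (Matrix.toLinAlgEquiv' A) = spectrum ℂ A :=
      AlgEquiv.spectrum_eq (Matrix.toLinAlgEquiv') A
    rw [← h1, ← Module.End.hasEigenvalue_iff_mem_spectrum]
    exact Module.End.hasEigenvalue_of_hasEigenvector
      ⟨Module.End.mem_eigenspace_iff.mpr hAv, hv0⟩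
  -- blockwise data
  let Φ : ∀ i, Kblk (lam i) (e i) →+* Kblk (conj (lam i)) (e i) :=
    fun i => conjHomAux _ _ _ rfl
  let Φ' : ∀ i, Kblk (conj (lam i)) (e i) →+* Kblk (lam i) (e i) :=
    fun i => conjHomAux _ _ _ (Complex.conj_conj (lam i))
  let ΦAdd : ∀ i, Kblk (lam i) (e i) ≃+ Kblk (conj (lam i)) (e i) := fun i =>
    { toFun := Φ i
      invFun := Φ' i
      left_inv := fun z => conjHomAux_comp_self _ _ _ rfl (Complex.conj_conj (lam i)) z
      right_inv := fun z => conjHomAux_comp_self _ _ _ (Complex.conj_conj (lam i)) rfl z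
      map_add' := map_add (Φ i) }
  choose Ξ hΞ using fun i => block_final (lam i) (e i) (habs i)
  let mapΦ : DirectSum ι (fun i => Kblk (lam i) (e i)) ≃+
      DirectSum ι (fun i => Kblk (conj (lam i)) (e i)) :=
    DFinsupp.mapRange.addEquiv ΦAdd
  let mapΞ : DirectSum ι (fun i => Kblk (conj (lam i)) (e i)) ≃ₗ[ℂ]
      DirectSum ι (fun i => Kblk (lam i) (e i)) :=
    DFinsupp.mapRange.linearEquiv Ξ
  have hmapΦ_apply : ∀ d i, mapΦ d i = Φ i (d i) := by
    intro d i
    simp only [mapΦ, DFinsupp.mapRange.addEquiv_apply, DFinsupp.mapRange_apply]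
    rfl
  have hmapΞ_apply : ∀ d i, mapΞ d i = Ξ i (d i) := by
    intro d i
    show DFinsupp.mapRange (fun i x => Ξ i x) (fun i => (Ξ i).map_zero) d i = (Ξ i) (d i)
    exact DFinsupp.mapRange_apply _ _ d i
  let EAdd : (Fin n → ℂ) ≃+ (Fin n → ℂ) :=
    (starAddEquiv).trans
      ((g.toAddEquiv.trans (mapΦ.trans mapΞ.toAddEquiv)).trans g.symm.toAddEquiv)
  have hEAdd_apply : ∀ v, EAdd v = g.symm (mapΞ (mapΦ (g (star v)))) := fun v => rfl
  have hmapΦ_smul : ∀ (a : ℂ) d, mapΦ (a • d) = conj a • mapΦ d := by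
    intro a d
    refine DFinsupp.ext fun i => ?_
    rw [hmapΦ_apply, DFinsupp.smul_apply, DFinsupp.smul_apply, hmapΦ_apply]
    exact conjHomAux_smul _ _ _ rfl a (d i)
  have hEsmul : ∀ (c : ℂ) v, EAdd (c • v) = c • EAdd v := by
    intro c v
    rw [hEAdd_apply, hEAdd_apply]
    rw [star_smul, _root_.map_smul, hmapΦ_smul]
    have : conj (star c) = c := by simp
    rw [this, _root_.map_smul, _root_.map_smul]
  let E : (Fin n → ℂ) ≃ₗ[ℂ] (Fin n → ℂ) := AddEquiv.toLinearEquiv EAdd hEsmul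
  have hE_apply : ∀ v, E v = EAdd v := fun v => rfl
  -- intertwining
  have hEB : ∀ v, E (B.mulVec v) = A.mulVec (E v) := by
    intro v
    have h2 : Am.mulVec (B.mulVec v) = v := by
      rw [Matrix.mulVec_mulVec, hAmB, Matrix.one_mulVec]
    have hu1 : A.mulVec (star (B.mulVec v)) = star v := by
      have h3 := hstar (B.mulVec v)
      rw [h3] at h2
      have := congrArg star h2
      rwa [star_star] at this
    rw [hE_apply, hE_apply, hEAdd_apply, hEAdd_apply]
    apply g.injective
    rw [hint, g.apply_symm_apply, g.apply_symm_apply]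
    have hgsv : g (star v) = (X : ℂ[X]) • g (star (B.mulVec v)) := by
      rw [← hu1, hint]
    rw [hgsv]
    refine DFinsupp.ext fun i => ?_
    rw [hmapΞ_apply, hmapΦ_apply, DFinsupp.smul_apply, hmapΞ_apply, hmapΦ_apply,
      DFinsupp.smul_apply, X_smul_adjoinRoot, X_smul_adjoinRoot]
    have hΦroot : Φ i (AdjoinRoot.root _ * (g (star (B.mulVec v)) i))
        = AdjoinRoot.root _ * Φ i (g (star (B.mulVec v)) i) := by
      rw [_root_.map_mul, conjHomAux_root]
    rw [hΦroot]
    exact hΞ i (Φ i (g (star (B.mulVec v)) i))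
  -- convert to matrices
  set Q : Matrix (Fin n) (Fin n) ℂ := LinearMap.toMatrix' (E : (Fin n → ℂ) →ₗ[ℂ] (Fin n → ℂ))
    with hQ
  have hQB : Q * B = A * Q := by
    have hcomp : (E : (Fin n → ℂ) →ₗ[ℂ] (Fin n → ℂ)).comp (Matrix.toLin' B)
        = (Matrix.toLin' A).comp (E : (Fin n → ℂ) →ₗ[ℂ] (Fin n → ℂ)) := by
      apply LinearMap.ext
      intro v
      simp only [LinearMap.comp_apply, Matrix.toLin'_apply]
      exact hEB v
    have h1 := congrArg LinearMap.toMatrix' hcomp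
    rwa [LinearMap.toMatrix'_comp, LinearMap.toMatrix'_comp, LinearMap.toMatrix'_toLin',
      LinearMap.toMatrix'_toLin', ← hQ] at h1
  have hQdet : IsUnit Q.det := by
    apply Matrix.isUnit_det_of_right_inverse
      (B := LinearMap.toMatrix' (E.symm : (Fin n → ℂ) →ₗ[ℂ] (Fin n → ℂ)))
    rw [← LinearMap.toMatrix'_comp]
    have : (E : (Fin n → ℂ) →ₗ[ℂ] (Fin n → ℂ)).comp
        (E.symm : (Fin n → ℂ) →ₗ[ℂ] (Fin n → ℂ)) = LinearMap.id := by
      apply LinearMap.ext; intro v; simp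
    rw [this, LinearMap.toMatrix'_id]
  refine ⟨Q⁻¹, ?_, ?_⟩
  · exact (Matrix.isUnit_iff_isUnit_det _).mpr
      (Matrix.isUnit_det_of_left_inverse (Matrix.mul_nonsing_inv Q hQdet))
  · rw [Matrix.nonsing_inv_nonsing_inv Q hQdet]
    calc Q⁻¹ * A * Q = Q⁻¹ * (A * Q) := by rw [mul_assoc]
      _ = Q⁻¹ * (Q * B) := by rw [hQB]
      _ = (Q⁻¹ * Q) * B := by rw [mul_assoc]
      _ = B := by rw [Matrix.nonsing_inv_mul Q hQdet, one_mul]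
end

section
/- Every semisimple element A of SL(n, ℂ) whose multiset of eigenvalues is invariant under λ ↦ conj(λ)⁻¹ is c-reversible. -/
open Matrix Polynomial

/-- From equality of multisets of values, extract a permutation. -/
lemma exists_perm_comp_aux {α : Type*} {n : ℕ} {f g : Fin n → α}
    (h : Multiset.map f Finset.univ.val = Multiset.map g Finset.univ.val) :
    ∃ σ : Equiv.Perm (Fin n), ∀ i, f (σ i) = g i := by
  classical
  letI : LinearOrder α := IsWellOrder.linearOrder WellOrderingRel
  have hp : (List.ofFn f).Perm (List.ofFn g) := by
    rw [← Multiset.coe_eq_coe, ← Fin.univ_val_map, ← Fin.univ_val_map]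
    exact h
  have h1 : List.ofFn (f ∘ Tuple.sort f) = List.ofFn (g ∘ Tuple.sort g) :=
    List.Perm.eq_of_sortedLE
      (Tuple.monotone_sort f).sortedLE_ofFn (Tuple.monotone_sort g).sortedLE_ofFn
      (((Tuple.sort f).ofFn_comp_perm f).trans
        (hp.trans ((Tuple.sort g).ofFn_comp_perm g).symm))
  have h2 : f ∘ Tuple.sort f = g ∘ Tuple.sort g := List.ofFn_injective h1
  refine ⟨(Tuple.sort g).symm.trans (Tuple.sort f), fun i => ?_⟩
  have h3 := congrFun h2 ((Tuple.sort g).symm i)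
  simpa using h3

/-- Conjugation invariance of the characteristic polynomial. -/
lemma charpoly_conj_aux {n : ℕ} (Q R M : Matrix (Fin n) (Fin n) ℂ)
    (h1 : Q * R = 1) (h2 : R * Q = 1) :
    (Q * M * R).charpoly = M.charpoly := by
  have hmapQR : Q.map C * R.map C = 1 := by
    rw [← Matrix.map_mul, h1, Matrix.map_one _ (map_zero C) (map_one C)]
  have hc : Matrix.scalar (Fin n) (X : ℂ[X]) * Q.map C
      = Q.map C * Matrix.scalar (Fin n) (X : ℂ[X]) :=
    Matrix.scalar_commute _ (fun r' => Commute.all _ _) _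
  have key : charmatrix (Q * M * R) = Q.map C * charmatrix M * R.map C := by
    unfold charmatrix
    rw [RingHom.mapMatrix_apply, RingHom.mapMatrix_apply, mul_sub, sub_mul]
    congr 1
    · refine Eq.symm ?_
      calc Q.map C * Matrix.scalar (Fin n) (X : ℂ[X]) * R.map C
          = Matrix.scalar (Fin n) (X : ℂ[X]) * Q.map C * R.map C := by rw [hc]
        _ = Matrix.scalar (Fin n) (X : ℂ[X]) * (Q.map C * R.map C) := by
            rw [Matrix.mul_assoc]
        _ = Matrix.scalar (Fin n) (X : ℂ[X]) := by rw [hmapQR, Matrix.mul_one]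
    · rw [Matrix.map_mul, Matrix.map_mul]
  have hdet1 : (Q.map C).det * (R.map C).det = 1 := by
    rw [← Matrix.det_mul, hmapQR, Matrix.det_one]
  unfold Matrix.charpoly
  rw [key, Matrix.det_mul, Matrix.det_mul,
    mul_comm (Q.map C).det (charmatrix M).det, mul_assoc, hdet1, mul_one]

/-- Roots of the characteristic polynomial of a diagonal matrix. -/
lemma roots_charpoly_diagonal_aux {n : ℕ} (d : Fin n → ℂ) :
    (Matrix.diagonal d).charpoly.roots = Multiset.map d Finset.univ.val := by
  have h1 : (Matrix.diagonal d).charpoly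
      = ∏ i : Fin n, (X - C (Matrix.diagonal d i i)) :=
    Matrix.charpoly_of_upperTriangular _ (Matrix.blockTriangular_diagonal d)
  have h2 : (Matrix.diagonal d).charpoly
      = ((Multiset.map d Finset.univ.val).map fun a => X - C a).prod := by
    rw [h1, Finset.prod_eq_multiset_prod, Multiset.map_map]
    simp [Function.comp]
  rw [h2, Polynomial.roots_multiset_prod_X_sub_C]

/-- A permutation conjugates one diagonal matrix to another. -/
lemma perm_conj_diagonal_aux {n : ℕ} (σ : Equiv.Perm (Fin n)) (d e : Fin n → ℂ)
    (h : ∀ i, d (σ i) = e i) :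
    ∃ T U : Matrix (Fin n) (Fin n) ℂ,
      T * U = 1 ∧ U * T = 1 ∧ T * Matrix.diagonal d * U = Matrix.diagonal e := by
  classical
  refine ⟨(1 : Matrix (Fin n) (Fin n) ℂ).submatrix ⇑σ _root_.id,
    (1 : Matrix (Fin n) (Fin n) ℂ).submatrix _root_.id ⇑σ, ?_, ?_, ?_⟩
  · have hh := Matrix.submatrix_mul_equiv (1 : Matrix (Fin n) (Fin n) ℂ)
      (1 : Matrix (Fin n) (Fin n) ℂ) (⇑σ) (Equiv.refl (Fin n)) (⇑σ)
    simpa [Matrix.submatrix_one_equiv] using hh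
  · have hh := Matrix.submatrix_mul_equiv (1 : Matrix (Fin n) (Fin n) ℂ)
      (1 : Matrix (Fin n) (Fin n) ℂ) (_root_.id) σ (_root_.id)
    simpa using hh
  · have hTD : (1 : Matrix (Fin n) (Fin n) ℂ).submatrix ⇑σ _root_.id * Matrix.diagonal d
        = Matrix.diagonal e * (1 : Matrix (Fin n) (Fin n) ℂ).submatrix ⇑σ _root_.id := by
      ext i j
      rw [Matrix.mul_diagonal, Matrix.diagonal_mul]
      simp only [Matrix.submatrix_apply, _root_.id, Matrix.one_apply]
      by_cases hij : σ i = j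
      · subst hij; simp [h i]
      · simp [hij]
    rw [hTD, Matrix.mul_assoc]
    have hh := Matrix.submatrix_mul_equiv (1 : Matrix (Fin n) (Fin n) ℂ)
      (1 : Matrix (Fin n) (Fin n) ℂ) (⇑σ) (Equiv.refl (Fin n)) (⇑σ)
    simp only [Equiv.coe_refl] at hh
    rw [hh]
    simp [Matrix.submatrix_one_equiv]

/-- Every semisimple (diagonalizable) element `A` of `SL(n, ℂ)` whose multiset
of eigenvalues is invariant under `λ ↦ conj(λ)⁻¹` is c-reversible. -/
theorem semisimple_c_reciprocal_spectrum_c_reversible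
    (n : ℕ) (A : Matrix (Fin n) (Fin n) ℂ) (hA : A.det = 1)
    (hdiag : ∃ P : Matrix (Fin n) (Fin n) ℂ, IsUnit P ∧ (P * A * P⁻¹).IsDiag)
    (hroots : (A.charpoly.roots).map (fun lam => (starRingEnd ℂ lam)⁻¹)
        = A.charpoly.roots) :
    ∃ P : Matrix (Fin n) (Fin n) ℂ, IsUnit P ∧
      P * A * P⁻¹ = (A.map (starRingEnd ℂ))⁻¹ := by
  classical
  obtain ⟨P, hP, hD⟩ := hdiag
  set c := starRingEnd ℂ with hc
  set d : Fin n → ℂ := (P * A * P⁻¹).diag with hd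
  have hPdet : IsUnit P.det := (Matrix.isUnit_iff_isUnit_det P).mp hP
  have hPP : P⁻¹ * P = 1 := Matrix.nonsing_inv_mul P hPdet
  have hPPinv : P * P⁻¹ = 1 := Matrix.mul_nonsing_inv P hPdet
  have hDdiag : Matrix.diagonal d = P * A * P⁻¹ := hD.diagonal_diag
  have hA' : A = P⁻¹ * Matrix.diagonal d * P := by
    rw [hDdiag]
    simp only [← Matrix.mul_assoc]
    rw [hPP, Matrix.one_mul, Matrix.mul_assoc, hPP, Matrix.mul_one]
  -- determinant of the diagonal part
  have hdetD : (Matrix.diagonal d).det = 1 := by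
    rw [hDdiag, Matrix.det_mul, Matrix.det_mul, hA, mul_one,
      Matrix.det_nonsing_inv, Ring.mul_inverse_cancel _ hPdet]
  have hprod : (∏ i : Fin n, d i) = 1 := by
    rw [← Matrix.det_diagonal, hdetD]
  have hd0 : ∀ i, d i ≠ 0 := by
    intro i hi
    have : (∏ j : Fin n, d j) = 0 :=
      Finset.prod_eq_zero (Finset.mem_univ i) hi
    rw [hprod] at this
    exact one_ne_zero this
  -- charpoly roots of A
  have hchA : A.charpoly = (Matrix.diagonal d).charpoly := by
    rw [hA']
    exact charpoly_conj_aux P⁻¹ P (Matrix.diagonal d) hPP hPPinv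
  have hrootsA : A.charpoly.roots = Multiset.map d Finset.univ.val := by
    rw [hchA, roots_charpoly_diagonal_aux]
  set e : Fin n → ℂ := fun i => (c (d i))⁻¹ with he
  have hme : Multiset.map d Finset.univ.val = Multiset.map e Finset.univ.val := by
    have := hroots
    rw [hrootsA, Multiset.map_map] at this
    exact this.symm
  obtain ⟨σ, hσ⟩ := exists_perm_comp_aux hme
  obtain ⟨T, U, hTU, hUT, hTDU⟩ := perm_conj_diagonal_aux σ d e hσ
  -- the conjugate matrix
  set Pc : Matrix (Fin n) (Fin n) ℂ := P.map c with hPc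
  have hPcdet : IsUnit Pc.det := by
    rw [hPc, ← RingHom.mapMatrix_apply, ← RingHom.map_det]
    exact hPdet.map c
  have hPcinvmap : Pc⁻¹ = (P⁻¹).map c := by
    apply Matrix.inv_eq_left_inv
    rw [← Matrix.map_mul, hPP, Matrix.map_one _ (map_zero c) (map_one c)]
  have hPcPc : Pc * Pc⁻¹ = 1 := Matrix.mul_nonsing_inv Pc hPcdet
  have hPcPc' : Pc⁻¹ * Pc = 1 := Matrix.nonsing_inv_mul Pc hPcdet
  have hAmapc : A.map c = Pc⁻¹ * Matrix.diagonal (fun i => c (d i)) * Pc := by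
    rw [hA', Matrix.map_mul, Matrix.map_mul, Matrix.diagonal_map (map_zero c),
      hPcinvmap]
  have hdiagmul : Matrix.diagonal (fun i => c (d i)) * Matrix.diagonal e = 1 := by
    rw [Matrix.diagonal_mul_diagonal]
    have heq : (fun i => c (d i) * e i) = fun _ => (1 : ℂ) := by
      funext i
      have hne : c (d i) ≠ 0 := by
        intro h0
        apply hd0 i
        have h1 := congrArg c h0
        simpa [hc] using h1
      exact mul_inv_cancel₀ hne
    rw [heq, Matrix.diagonal_one]
  have hAinv : (A.map c)⁻¹ = Pc⁻¹ * Matrix.diagonal e * Pc := by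
    apply Matrix.inv_eq_right_inv
    rw [hAmapc]
    calc Pc⁻¹ * Matrix.diagonal (fun i => c (d i)) * Pc
          * (Pc⁻¹ * Matrix.diagonal e * Pc)
        = Pc⁻¹ * (Matrix.diagonal (fun i => c (d i)) * ((Pc * Pc⁻¹)
            * (Matrix.diagonal e * Pc))) := by
          simp only [Matrix.mul_assoc]
      _ = Pc⁻¹ * (Matrix.diagonal (fun i => c (d i)) * Matrix.diagonal e * Pc) := by
          rw [hPcPc, Matrix.one_mul, Matrix.mul_assoc]
      _ = Pc⁻¹ * Pc := by rw [hdiagmul, Matrix.one_mul]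
      _ = 1 := hPcPc'
  refine ⟨Pc⁻¹ * T * P, ?_, ?_⟩
  · -- IsUnit
    apply (Matrix.isUnit_iff_isUnit_det _).mpr
    apply Matrix.isUnit_det_of_right_inverse (B := P⁻¹ * U * Pc)
    calc Pc⁻¹ * T * P * (P⁻¹ * U * Pc)
        = Pc⁻¹ * (T * ((P * P⁻¹) * (U * Pc))) := by simp only [Matrix.mul_assoc]
      _ = Pc⁻¹ * (T * U * Pc) := by rw [hPPinv, Matrix.one_mul, Matrix.mul_assoc]
      _ = Pc⁻¹ * Pc := by rw [hTU, Matrix.one_mul]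
      _ = 1 := hPcPc'
  · have hRinv : (Pc⁻¹ * T * P)⁻¹ = P⁻¹ * U * Pc := by
      apply Matrix.inv_eq_right_inv
      calc Pc⁻¹ * T * P * (P⁻¹ * U * Pc)
          = Pc⁻¹ * (T * ((P * P⁻¹) * (U * Pc))) := by simp only [Matrix.mul_assoc]
        _ = Pc⁻¹ * (T * U * Pc) := by rw [hPPinv, Matrix.one_mul, Matrix.mul_assoc]
        _ = Pc⁻¹ * Pc := by rw [hTU, Matrix.one_mul]
        _ = 1 := hPcPc'
    rw [hRinv, hAinv, hA']
    calc Pc⁻¹ * T * P * (P⁻¹ * Matrix.diagonal d * P) * (P⁻¹ * U * Pc)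
        = Pc⁻¹ * (T * ((P * P⁻¹) * (Matrix.diagonal d * ((P * P⁻¹) * (U * Pc))))) := by
          simp only [Matrix.mul_assoc]
      _ = Pc⁻¹ * (T * (Matrix.diagonal d * (U * Pc))) := by
          rw [hPPinv, Matrix.one_mul, Matrix.one_mul]
      _ = Pc⁻¹ * (T * Matrix.diagonal d * U) * Pc := by
          simp only [Matrix.mul_assoc]
      _ = Pc⁻¹ * Matrix.diagonal e * Pc := by rw [hTDU]
end
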